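/- Every neat commutative ring is locally stable. -/

import Mathlib

open Matrix

/-- A commutative ring `T` has stable range 1: whenever `cT + dT = T`,
there exists `y` with `c + d*y` a unit. -/
def StableRange1 (T : Type) [CommRing T] : Prop :=
  ∀ c d : T, IsCoprime c d → ∃ y : T, IsUnit (c + d * y)

/-- The multiplicative set `S_a = { b | aR + bR = R }`. -/
def Sa (R : Type) [CommRing R] (a : R) : Submonoid R where
  carrier := {x | IsCoprime a x}
  one_mem' := isCoprime_one_right
  mul_mem' := fun hb hc => IsCoprime.mul_right hb hc

/-- `R` is locally stable: whenever `aR + bR = R` there is `y` such that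
`R/(a+by)R` has stable range 1. -/
def LocallyStable (R : Type) [CommRing R] : Prop :=
  ∀ a b : R, IsCoprime a b → ∃ y : R,
    StableRange1 (R ⧸ Ideal.span ({a + b * y} : Set R))

/-- `c` is an adequate element. -/
def Adequate {R : Type} [CommRing R] (c : R) : Prop :=
  ∀ a : R, ∃ r s : R, c = r * s ∧ IsCoprime r a ∧
    ∀ s' : R, s' ∣ s → ¬ IsUnit s' → ¬ IsCoprime s' a

/-- A ring is clean if every element is the sum of an idempotent and a unit. -/
def IsCleanRing (T : Type) [CommRing T] : Prop :=
  ∀ x : T, ∃ e u : T, IsIdempotentElem e ∧ IsUnit u ∧ x = e + u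

/-- A ring is VNL if for every `x`, `x` or `1 - x` is von Neumann regular. -/
def IsVNLRing (T : Type) [CommRing T] : Prop :=
  ∀ x : T, (∃ y : T, x = x * y * x) ∨ (∃ y : T, (1 - x) = (1 - x) * y * (1 - x))

/-- `R` has almost stable range 1: every proper homomorphic image has stable range 1. -/
def AlmostStableRange1 (R : Type) [CommRing R] : Prop :=
  ∀ I : Ideal R, I ≠ ⊥ → StableRange1 (R ⧸ I)

/-- `R` has adequate range 1. -/
def AdequateRange1 (R : Type) [CommRing R] : Prop :=
  ∀ a b : R, IsCoprime a b → ∃ y : R, Adequate (a + b * y)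

/-- A (rectangular) matrix admits diagonal reduction. -/
def DiagonalReduction {R : Type} [CommRing R] {m n : ℕ}
    (A : Matrix (Fin m) (Fin n) R) : Prop :=
  ∃ (P : Matrix (Fin m) (Fin m) R) (Q : Matrix (Fin n) (Fin n) R),
    IsUnit P ∧ IsUnit Q ∧
    (∀ (i : Fin m) (j : Fin n), (i : ℕ) ≠ (j : ℕ) → (P * A * Q) i j = 0) ∧
    (∀ (i i' : Fin m) (j j' : Fin n), (i : ℕ) = (j : ℕ) → (i' : ℕ) = (j' : ℕ) →
      (i : ℕ) + 1 = (i' : ℕ) → (P * A * Q) i j ∣ (P * A * Q) i' j')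

/-- `R` is an elementary divisor ring. -/
def ElementaryDivisorRing (R : Type) [CommRing R] : Prop :=
  ∀ (m n : ℕ) (A : Matrix (Fin m) (Fin n) R), DiagonalReduction A

/-- `GE n R` : the subgroup of `GL n R` generated by elementary matrices. -/
def GE (n : ℕ) (R : Type) [CommRing R] : Subgroup (GL (Fin n) R) :=
  Subgroup.closure
    { M | ∃ t : Matrix.TransvectionStruct (Fin n) R,
        (M : Matrix (Fin n) (Fin n) R) = t.toMatrix }

/-- Every commutative clean ring has stable range 1. -/
theorem IsCleanRing.stableRange1 {T : Type} [CommRing T]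
    (hc : IsCleanRing T) : StableRange1 T := by
  intro c d hcd
  obtain ⟨s, t, hst⟩ := hcd
  obtain ⟨e, u, he, hu, htd⟩ := hc (t * d)
  obtain ⟨v, huv⟩ := isUnit_iff_exists_inv.mp hu
  have hee : e * e = e := he
  refine ⟨t * v * (1 - e) * (1 - c),
    IsUnit.of_mul_eq_one ((1 - e) - e * s * v) ?_⟩
  linear_combination ((1 - c) + v + s * v * (1 - c)
      - v * (1 - c) * ((1 - e) - e * s * v)) * hee
    + (e + (1 - e) * (1 - c) * ((1 - e) - e * s * v)) * huv
    + (e * v + v * (1 - e) * (1 - c) * ((1 - e) - e * s * v)) * htd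
    - e * v * hst

/-- Every neat commutative ring (every proper homomorphic image is clean)
is locally stable. -/
theorem stmt_7 (R : Type) [CommRing R]
    (h : ∀ I : Ideal R, I ≠ ⊥ → IsCleanRing (R ⧸ I)) :
    LocallyStable R := by
  intro a b hab
  by_cases hR : (1 : R) = 0
  · refine ⟨0, fun c d _ => ⟨0, ?_⟩⟩
    haveI : Subsingleton R := subsingleton_of_zero_eq_one hR.symm
    haveI : Subsingleton (R ⧸ Ideal.span ({a + b * 0} : Set R)) :=
      Quotient.instSubsingletonQuotient _
    exact isUnit_of_subsingleton _
  · have key : ∀ y : R, a + b * y ≠ 0 →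
        StableRange1 (R ⧸ Ideal.span ({a + b * y} : Set R)) := by
      intro y hy
      apply IsCleanRing.stableRange1
      apply h
      intro hbot
      exact hy (Ideal.span_singleton_eq_bot.mp hbot)
    by_cases ha : a = 0
    · refine ⟨1, key 1 ?_⟩
      intro hb
      apply hR
      subst ha
      rw [zero_add, mul_one] at hb
      obtain ⟨u, v, huv⟩ := hab
      rw [hb] at huv
      simpa using huv.symm
    · refine ⟨0, key 0 ?_⟩
      simpa using ha
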